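/- Let m ≥ 1079 be an integer and let x, y be integers with y ≥ 1 satisfying x¹³ − m·y¹³ = 1 or x¹³ − m·y¹³ = −1. Then |m^{1/13} − x/y| < 1/(2y²). -/

import Mathlib

/-- For an integer `m ≥ 1079` and integers `x, y` with `y ≥ 1`
satisfying `x¹³ − m·y¹³ = ±1`, one has `|m^{1/13} − x/y| < 1/(2y²)`. -/
theorem stmt_11 (m : ℤ) (hm : 1079 ≤ m) (x y : ℤ) (hy : 1 ≤ y)
    (h : x ^ 13 - m * y ^ 13 = 1 ∨ x ^ 13 - m * y ^ 13 = -1) :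
    |(m : ℝ) ^ ((1 : ℝ) / 13) - (x : ℝ) / (y : ℝ)| < 1 / (2 * (y : ℝ) ^ 2) := by
  have hy1 : (1:ℝ) ≤ (y:ℝ) := by exact_mod_cast hy
  have hyp : (0:ℝ) < (y:ℝ) := by linarith
  have hmR : (1079:ℝ) ≤ (m:ℝ) := by exact_mod_cast hm
  have hm0 : (0:ℝ) ≤ (m:ℝ) := by linarith
  set a : ℝ := (m:ℝ) ^ ((1:ℝ)/13) with ha
  have ha0 : 0 ≤ a := Real.rpow_nonneg hm0 _
  have ha13 : a ^ 13 = (m:ℝ) := by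
    rw [ha, ← Real.rpow_natCast ((m:ℝ) ^ ((1:ℝ)/13)) 13, ← Real.rpow_mul hm0]
    norm_num
  have ha17 : (1.7:ℝ) < a := by
    have h1 : (1.7:ℝ) ^ 13 < a ^ 13 := by rw [ha13]; nlinarith
    exact lt_of_pow_lt_pow_left₀ 13 ha0 h1
  -- integer side: x ≥ 1
  have hy13 : (1:ℤ) ≤ y ^ 13 := one_le_pow₀ hy
  have hmy : (1079:ℤ) ≤ m * y ^ 13 := by nlinarith
  have hx13 : (1:ℤ) ≤ x ^ 13 := by rcases h with h | h <;> linarith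
  have hx1 : (1:ℤ) ≤ x := by
    by_contra hc
    push_neg at hc
    have hx0 : x ≤ 0 := by linarith
    have : x ^ 13 ≤ 0 := Odd.pow_nonpos (by decide) hx0
    linarith
  have hX1 : (1:ℝ) ≤ (x:ℝ) := by exact_mod_cast hx1
  set b : ℝ := a * (y:ℝ) with hb
  have hb0 : 0 ≤ b := by positivity
  have hb13 : b ^ 13 = (m:ℝ) * (y:ℝ) ^ 13 := by rw [hb, mul_pow, ha13]
  -- the geometric sum
  set S : ℝ := ∑ i ∈ Finset.range 13, (x:ℝ) ^ i * b ^ (13 - 1 - i) with hSdef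
  have hkey : S * ((x:ℝ) - b) = (x:ℝ) ^ 13 - b ^ 13 := geom_sum₂_mul (x:ℝ) b 13
  -- S is large
  have hb12S : b ^ 12 ≤ S := by
    have h0 : (0:ℕ) ∈ Finset.range 13 := by simp
    have := Finset.single_le_sum (f := fun i => (x:ℝ) ^ i * b ^ (13 - 1 - i))
      (fun i _ => by positivity) h0
    simpa using this
  have hSy : 2 * (y:ℝ) < S := by
    have h1 : (1.7:ℝ) ^ 12 < a ^ 12 := pow_lt_pow_left₀ ha17 (by norm_num) (by norm_num)
    have h2 : (y:ℝ) ≤ (y:ℝ) ^ 12 := le_self_pow₀ (by linarith) (by norm_num)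
    have h3 : b ^ 12 = a ^ 12 * (y:ℝ) ^ 12 := mul_pow a (y:ℝ) 12
    nlinarith [pow_nonneg hyp.le 12]
  have hS0 : 0 < S := by linarith
  -- |S * (x - b)| = 1
  have hE : S * ((x:ℝ) - b) = 1 ∨ S * ((x:ℝ) - b) = -1 := by
    rcases h with h | h
    · left
      rw [hkey, hb13]
      have : ((x:ℤ):ℝ) ^ 13 - (m:ℝ) * ((y:ℤ):ℝ) ^ 13 = 1 := by exact_mod_cast congrArg (Int.cast : ℤ → ℝ) h
      exact_mod_cast this
    · right
      rw [hkey, hb13]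
      have : ((x:ℤ):ℝ) ^ 13 - (m:ℝ) * ((y:ℤ):ℝ) ^ 13 = -1 := by exact_mod_cast congrArg (Int.cast : ℤ → ℝ) h
      exact_mod_cast this
  set d : ℝ := |(x:ℝ) - b| with hd
  have hSd : S * d = 1 := by
    rcases hE with hE | hE
    · rw [hd, ← abs_of_pos hS0, ← abs_mul, hE]; simp
    · rw [hd, ← abs_of_pos hS0, ← abs_mul, hE]; simp
  have hd0 : 0 ≤ d := abs_nonneg _
  have hdpos : 0 < d := by
    rcases hd0.lt_or_eq with h' | h'
    · exact h'
    · rw [← h'] at hSd; simp at hSd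
  -- rewrite the goal
  have hgoal : a - (x:ℝ) / (y:ℝ) = -(((x:ℝ) - b) / (y:ℝ)) := by
    rw [hb]; field_simp; ring
  rw [hgoal, abs_neg, abs_div, abs_of_pos hyp, ← hd]
  rw [div_lt_div_iff₀ hyp (by positivity)]
  -- d * (2 * y^2) < 1 * y
  have h2yd : 2 * (y:ℝ) * d < 1 := by nlinarith [mul_pos (sub_pos.mpr hSy) hdpos]
  nlinarith [mul_pos hyp (sub_pos.mpr h2yd)]
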